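/- For each v in the binary tree, Σ_{z ∈ S_{|v|}} |⟨δ_v, N δ_z⟩| ≤ 2|v| (for |v| ≥ 1), where N is the Haar-level operator on ℓ²(S_{|v|}). -/

import Mathlib

noncomputable section

/-- The sphere S_r of the binary tree, identified with {0,1}^r. -/
abbrev Sph (r : ℕ) := {l : List Bool // l.length = r}

/-- Index set for the Haar basis of ℓ²(S_r): `none` is the constant function
(level 0); `some p`, with p a binary word of length n−1 (1 ≤ n ≤ r), indexes
the level-n Haar function supported on the dyadic block of the 2^{r−n+1}
vertices having suffix p. -/
abbrev HaarIdx (r : ℕ) := Option {p : List Bool // p.length < r}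

/-- The level n(α) of a Haar basis function. -/
def haarLevel {r : ℕ} : HaarIdx r → ℕ
  | none => 0
  | some p => p.1.length + 1

/-- The Haar basis function ρ_α of ℓ²(S_r): the constant 2^{−r/2} at level 0,
and at level n the function supported on a dyadic block of size 2^{r−n+1}
taking the values ±2^{−(r−n+1)/2} on its two halves. -/
def haarFn {r : ℕ} (α : HaarIdx r) (v : Sph r) : ℂ :=
  match α with
  | none => ((Real.sqrt (2 ^ r))⁻¹ : ℝ)
  | some p =>
      if p.1 <:+ v.1 then
        (if v.1.getD (r - p.1.length - 1) true then 1 else -1)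
          * ((Real.sqrt (2 ^ (r - p.1.length)))⁻¹ : ℝ)
      else 0

/-- The Haar-level operator N = Σ_α n(α) ⟨ρ_α, ·⟩ ρ_α on ℓ²(S_r). -/
def NOp {r : ℕ} (φ : Sph r → ℂ) : Sph r → ℂ :=
  fun z => ∑' α : HaarIdx r,
    (haarLevel α : ℂ) * haarFn α z * ∑' w : Sph r, (starRingEnd ℂ) (haarFn α w) * φ w

/-- The standard basis vector δ_w. -/
def delta {r : ℕ} (w : Sph r) : Sph r → ℂ := fun u => if u = w then 1 else 0

/-- The matrix element ⟨δ_z, N δ_w⟩. -/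
def Nent {r : ℕ} (z w : Sph r) : ℂ := NOp (delta w) z

----------------------------------------------------------------

instance instSphFintype (r : ℕ) : Fintype (Sph r) := show Fintype (List.Vector Bool r) from inferInstance

instance instPFintype (r : ℕ) : Fintype {p : List Bool // p.length < r} :=
  Fintype.ofSurjective
    (f := fun x : Σ k : Fin r, Sph k =>
      (⟨x.2.1, by rw [x.2.2]; exact x.1.2⟩ : {p : List Bool // p.length < r}))
    (fun p => ⟨⟨⟨p.1.length, p.2⟩, ⟨p.1, rfl⟩⟩, rfl⟩)

namespace NRow

variable {r : ℕ}

/-- Real version of the Haar function. -/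
def g (α : HaarIdx r) (v : Sph r) : ℝ :=
  match α with
  | none => (Real.sqrt (2 ^ r))⁻¹
  | some p =>
      if p.1 <:+ v.1 then
        (if v.1.getD (r - p.1.length - 1) true then 1 else -1)
          * (Real.sqrt (2 ^ (r - p.1.length)))⁻¹
      else 0

lemma haarFn_eq (α : HaarIdx r) (v : Sph r) : haarFn α v = ((g α v : ℝ) : ℂ) := by
  cases α with
  | none => rfl
  | some p =>
      simp only [haarFn, g]
      split_ifs <;> push_cast <;> ring

/-- The real matrix entry. -/
def F (v z : Sph r) : ℝ := ∑ α : HaarIdx r, (haarLevel α : ℝ) * g α v * g α z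

lemma Nent_eq (v z : Sph r) : Nent v z = ((F v z : ℝ) : ℂ) := by
  have h1 : ∀ α : HaarIdx r,
      ∑' w : Sph r, (starRingEnd ℂ) (haarFn α w) * delta z w
        = (starRingEnd ℂ) (haarFn α z) := by
    intro α
    have := tsum_eq_single (f := fun w : Sph r => (starRingEnd ℂ) (haarFn α w) * delta z w) (L := SummationFilter.unconditional _) z
      (fun w hw => by simp [delta, hw])
    simpa [delta] using this
  unfold Nent NOp
  simp only [h1]
  rw [tsum_fintype, F, Complex.ofReal_sum]
  refine Finset.sum_congr rfl (fun α _ => ?_)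
  rw [haarFn_eq, haarFn_eq, Complex.conj_ofReal]
  push_cast
  ring

lemma sq_sqrt_inv (n : ℕ) :
    (Real.sqrt (2 ^ n))⁻¹ * (Real.sqrt (2 ^ n))⁻¹ = ((2:ℝ) ^ n)⁻¹ := by
  rw [← mul_inv, Real.mul_self_sqrt (by positivity)]

lemma suffix_iff (u : Sph r) (p : List Bool) :
    p <:+ u.1 ↔ p = u.1.drop (r - p.length) := by
  rw [List.suffix_iff_eq_drop, u.2]

lemma length_drop_u (u : Sph r) {k : ℕ} (hk : k ≤ r) : (u.1.drop (r - k)).length = k := by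
  rw [List.length_drop, u.2, Nat.sub_sub_self hk]

lemma pow_inv_split {a b : ℕ} (h : b ≤ a) : ((2:ℝ) ^ (a - b))⁻¹ = 2 ^ b * ((2:ℝ) ^ a)⁻¹ := by
  have h2 : (2:ℝ) ^ (a - b) * (2:ℝ) ^ b = 2 ^ a := by rw [← pow_add]; congr 1; omega
  have h3 : ((2:ℝ) ^ b) ≠ 0 := by positivity
  have h4 : ((2:ℝ) ^ (a - b)) ≠ 0 := by positivity
  rw [← h2, mul_inv]
  field_simp

lemma sum_pow_inv (n : ℕ) (hn : n ≤ r) :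
    ∑ k ∈ Finset.range n, ((2:ℝ) ^ (r - k))⁻¹ = ((2:ℝ) ^ n - 1) * ((2:ℝ) ^ r)⁻¹ := by
  have h : ∀ k ∈ Finset.range n, ((2:ℝ) ^ (r - k))⁻¹ = (2:ℝ) ^ k * ((2:ℝ) ^ r)⁻¹ := by
    intro k hk
    have hkr : k ≤ r := le_trans (Finset.mem_range.mp hk).le hn
    exact pow_inv_split hkr
  rw [Finset.sum_congr rfl h, ← Finset.sum_mul]
  congr 1
  rw [geom_sum_eq (show (2:ℝ) ≠ 1 by norm_num) n]
  norm_num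

/-- Sum over the Haar-index subtype of a function of the suffix length. -/
lemma sum_suffix (hr : 0 < r) (v : Sph r) (h : ℕ → ℝ) (n : ℕ) (hn : n ≤ r) :
    ∑ p : {p : List Bool // p.length < r},
        (if p.1 <:+ v.1 ∧ p.1.length < n then h p.1.length else 0)
      = ∑ k ∈ Finset.range n, h k := by
  classical
  set q : ℕ → {p : List Bool // p.length < r} := fun k =>
    if hk : k < r then ⟨v.1.drop (r - k), by rw [length_drop_u v hk.le]; exact hk⟩
    else ⟨[], by simpa using hr⟩ with hq
  have hlen : ∀ k, k < r → (q k).1.length = k := by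
    intro k hk
    simp only [hq, dif_pos hk]
    exact length_drop_u v hk.le
  have hval : ∀ k, k < r → (q k).1 = v.1.drop (r - k) := by
    intro k hk; simp only [hq, dif_pos hk]
  rw [← Finset.sum_subset (Finset.subset_univ ((Finset.range n).image q))]
  · rw [Finset.sum_image ?inj]
    case inj =>
      intro a ha b hb hab
      have := congrArg (fun p : {p : List Bool // p.length < r} => p.1.length) hab
      rwa [hlen a (lt_of_lt_of_le (Finset.mem_range.mp ha) hn),
        hlen b (lt_of_lt_of_le (Finset.mem_range.mp hb) hn)] at this
    apply Finset.sum_congr rfl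
    intro k hk
    have hkn : k < n := Finset.mem_range.mp hk
    have hkr : k < r := lt_of_lt_of_le hkn hn
    rw [if_pos, hlen k hkr]
    refine ⟨?_, by rw [hlen k hkr]; exact hkn⟩
    rw [hval k hkr]
    exact List.drop_suffix _ _
  · intro p _ hp
    rw [if_neg]
    rintro ⟨hsuf, hlt⟩
    apply hp
    rw [Finset.mem_image]
    refine ⟨p.1.length, Finset.mem_range.mpr hlt, ?_⟩
    apply Subtype.ext
    rw [hval _ p.2]
    exact ((suffix_iff v p.1).mp hsuf).symm

lemma sign_mul_sign (b c : Bool) (x y : ℝ) :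
    ((if b then (1:ℝ) else -1) * x) * ((if c then (1:ℝ) else -1) * y)
      = (if b = c then x * y else -(x * y)) := by
  cases b <;> cases c <;> simp <;> ring

lemma g_some_sq (v : Sph r) (p : {p : List Bool // p.length < r}) :
    g (some p) v * g (some p) v
      = (if p.1 <:+ v.1 ∧ p.1.length < r then ((2:ℝ) ^ (r - p.1.length))⁻¹ else 0) := by
  simp only [g, p.2, and_true]
  by_cases h : p.1 <:+ v.1
  · rw [if_pos h, if_pos h, sign_mul_sign, if_pos rfl, sq_sqrt_inv]
  · rw [if_neg h, if_neg h, mul_zero]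

lemma sum_gsq_le (hr : 0 < r) (v : Sph r) :
    ∑ α : HaarIdx r, g α v * g α v ≤ 1 := by
  rw [Fintype.sum_option]
  have h0 : g (none : HaarIdx r) v * g none v = ((2:ℝ) ^ r)⁻¹ := sq_sqrt_inv r
  rw [h0, Finset.sum_congr rfl (fun p _ => g_some_sq v p),
    sum_suffix hr v (fun k => ((2:ℝ) ^ (r - k))⁻¹) r le_rfl,
    sum_pow_inv r le_rfl]
  have h2 : ((2:ℝ) ^ r) ≠ 0 := by positivity
  field_simp
  linarith

lemma haarLevel_le (α : HaarIdx r) : haarLevel α ≤ r := by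
  cases α with
  | none => exact Nat.zero_le _
  | some p => exact p.2

lemma F_self_nonneg (v : Sph r) : 0 ≤ F v v := by
  apply Finset.sum_nonneg
  intro α _
  rw [mul_assoc]
  exact mul_nonneg (by positivity) (mul_self_nonneg _)

lemma F_self_le (hr : 0 < r) (v : Sph r) : F v v ≤ r := by
  have hterm : ∀ α : HaarIdx r,
      (haarLevel α : ℝ) * g α v * g α v ≤ (r : ℝ) * (g α v * g α v) := by
    intro α
    rw [mul_assoc]
    apply mul_le_mul_of_nonneg_right _ (mul_self_nonneg _)
    exact_mod_cast haarLevel_le α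
  calc F v v ≤ ∑ α : HaarIdx r, (r : ℝ) * (g α v * g α v) :=
        Finset.sum_le_sum (fun α _ => hterm α)
    _ = (r : ℝ) * ∑ α : HaarIdx r, g α v * g α v := by rw [Finset.mul_sum]
    _ ≤ (r : ℝ) * 1 := by
        apply mul_le_mul_of_nonneg_left (sum_gsq_le hr v) (by positivity)
    _ = r := by ring

lemma getD_drop (l : List Bool) (n i : ℕ) (d : Bool) :
    (l.drop n).getD i d = l.getD (n + i) d := by
  simp [List.getD_eq_getElem?_getD, List.getElem?_drop]

lemma set_getD_self (l : List Bool) {i : ℕ} (h : i < l.length) :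
    l.set i (l.getD i true) = l := by
  rw [List.getD_eq_getElem _ _ h]
  apply List.ext_getElem (by simp)
  intro j h1 h2
  by_cases hij : i = j
  · subst hij
    exact List.getElem_set_self h1
  · exact List.getElem_set_ne hij h1

lemma sum_g_zero (hr : 0 < r) (p : {p : List Bool // p.length < r}) :
    ∑ z : Sph r, g (some p) z = 0 := by
  classical
  have hkr : p.1.length < r := p.2
  have hik : r - p.1.length - 1 < r - p.1.length := by omega
  have hir : r - p.1.length - 1 < r := by omega
  have hlen : ∀ z : Sph r, r - p.1.length - 1 < z.1.length := fun z => by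
    rw [z.2]; exact hir
  -- the bit-flipping involution
  have hsetlen : ∀ (z : Sph r) (b : Bool),
      (z.1.set (r - p.1.length - 1) b).length = r := fun z b => by
    rw [List.length_set]; exact z.2
  set flip : Sph r → Sph r := fun z =>
    ⟨z.1.set (r - p.1.length - 1) (! z.1.getD (r - p.1.length - 1) true),
      hsetlen z _⟩ with hflip
  have hgetD : ∀ z : Sph r,
      (flip z).1.getD (r - p.1.length - 1) true
        = ! (z.1.getD (r - p.1.length - 1) true) := by
    intro z
    have h1 : r - p.1.length - 1 < (flip z).1.length := hlen (flip z)
    rw [List.getD_eq_getElem _ _ h1]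
    exact List.getElem_set_self (by rw [hflip] at h1; exact h1)
  have hdrop : ∀ z : Sph r,
      (flip z).1.drop (r - p.1.length) = z.1.drop (r - p.1.length) := by
    intro z
    show (z.1.set _ _).drop (r - p.1.length) = _
    rw [List.drop_set, if_pos hik]
  have hsuf : ∀ z : Sph r, (p.1 <:+ (flip z).1 ↔ p.1 <:+ z.1) := by
    intro z
    rw [suffix_iff (flip z) p.1, suffix_iff z p.1, hdrop z]
  have hneg : ∀ z : Sph r, g (some p) (flip z) = - g (some p) z := by
    intro z
    have hb' : ((z.1.set (r - p.1.length - 1) (! z.1.getD (r - p.1.length - 1) true)).getD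
        (r - p.1.length - 1) true) = ! (z.1.getD (r - p.1.length - 1) true) := hgetD z
    have hs' : (p.1 <:+ z.1.set (r - p.1.length - 1) (! z.1.getD (r - p.1.length - 1) true))
        ↔ p.1 <:+ z.1 := by
      rw [List.suffix_iff_eq_drop, List.suffix_iff_eq_drop, List.length_set, z.2,
        List.drop_set, if_pos hik]
    show (if p.1 <:+ z.1.set (r - p.1.length - 1) (! z.1.getD (r - p.1.length - 1) true) then
        (if (z.1.set (r - p.1.length - 1) (! z.1.getD (r - p.1.length - 1) true)).getD
            (r - p.1.length - 1) true then (1:ℝ) else -1)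
          * (Real.sqrt (2 ^ (r - p.1.length)))⁻¹ else 0)
      = - (if p.1 <:+ z.1 then
          (if z.1.getD (r - p.1.length - 1) true then (1:ℝ) else -1)
            * (Real.sqrt (2 ^ (r - p.1.length)))⁻¹ else 0)
    rw [if_congr hs' rfl rfl, hb']
    by_cases h : p.1 <:+ z.1
    · rw [if_pos h, if_pos h]
      cases hbz : z.1.getD (r - p.1.length - 1) true <;> norm_num [hbz]
    · rw [if_neg h, if_neg h]
      ring
  have hinv : ∀ z : Sph r, flip (flip z) = z := by
    intro z
    apply Subtype.ext
    show ((flip z).1).set (r - p.1.length - 1) (! (flip z).1.getD (r - p.1.length - 1) true) = z.1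
    rw [hgetD z, Bool.not_not]
    show (z.1.set _ _).set _ _ = z.1
    rw [List.set_set]
    exact set_getD_self z.1 (hlen z)
  have hne : ∀ z : Sph r, flip z ≠ z := by
    intro z hcontra
    have := congrArg (fun u : Sph r => u.1.getD (r - p.1.length - 1) true) hcontra
    rw [hgetD z] at this
    exact (Bool.not_ne_self _) this
  apply Finset.sum_involution (g := fun z _ => flip z)
  · intro z _
    rw [hneg z]; ring
  · intro z _ _
    exact hne z
  · intro z _; exact Finset.mem_univ _
  · intro z _; exact hinv z

lemma sum_F_zero (hr : 0 < r) (v : Sph r) : ∑ z : Sph r, F v z = 0 := by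
  unfold F
  rw [Finset.sum_comm]
  apply Finset.sum_eq_zero
  intro α _
  rw [← Finset.mul_sum]
  cases α with
  | none => simp [haarLevel]
  | some p => rw [sum_g_zero hr p, mul_zero]

lemma F_offdiag_nonpos (hr : 0 < r) (v z : Sph r) (hvz : z ≠ v) : F v z ≤ 0 := by
  classical
  have hQ0 : z.1.drop (r - 0) = v.1.drop (r - 0) := by
    have e1 : z.1.drop r = [] := by
      have := List.drop_length (l := z.1); rwa [z.2] at this
    have e2 : v.1.drop r = [] := by
      have := List.drop_length (l := v.1); rwa [v.2] at this
    simp only [Nat.sub_zero, e1, e2]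
  obtain ⟨m, hm⟩ : ∃ m, m = Nat.findGreatest
      (fun k => z.1.drop (r - k) = v.1.drop (r - k)) (r - 1) := ⟨_, rfl⟩
  have hmr : m ≤ r - 1 := by rw [hm]; exact Nat.findGreatest_le _
  have hmr' : m < r := lt_of_le_of_lt hmr (Nat.sub_lt hr one_pos)
  have hQm : z.1.drop (r - m) = v.1.drop (r - m) := by
    rw [hm]
    exact Nat.findGreatest_spec
      (P := fun k => z.1.drop (r - k) = v.1.drop (r - k)) (Nat.zero_le _) hQ0
  have hle : ∀ k, k ≤ r - 1 → z.1.drop (r - k) = v.1.drop (r - k) → k ≤ m := by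
    intro k hk h
    rw [hm]
    exact Nat.le_findGreatest (P := fun k => z.1.drop (r - k) = v.1.drop (r - k)) hk h
  have hmono : ∀ k, k ≤ m → z.1.drop (r - k) = v.1.drop (r - k) := by
    intro k hkm
    have he : r - k = (r - m) + (m - k) := by omega
    rw [he, ← List.drop_drop, ← List.drop_drop, hQm]
  -- the bits at position r - m - 1 differ
  have hbit : z.1.getD (r - m - 1) true ≠ v.1.getD (r - m - 1) true := by
    intro heq
    have hi₀ : r - m - 1 < r := by omega
    have hzl : r - m - 1 < z.1.length := by rw [z.2]; exact hi₀
    have hvl : r - m - 1 < v.1.length := by rw [v.2]; exact hi₀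
    have hz1 : z.1.drop (r - m - 1) = z.1[r - m - 1] :: z.1.drop (r - m) := by
      rw [List.drop_eq_getElem_cons hzl]
      congr 2
      omega
    have hv1 : v.1.drop (r - m - 1) = v.1[r - m - 1] :: v.1.drop (r - m) := by
      rw [List.drop_eq_getElem_cons hvl]
      congr 2
      omega
    have hQm1 : z.1.drop (r - (m + 1)) = v.1.drop (r - (m + 1)) := by
      have hidx : r - (m + 1) = r - m - 1 := by omega
      rw [hidx, hz1, hv1, hQm]
      congr 1
      rw [← List.getD_eq_getElem z.1 true hzl, ← List.getD_eq_getElem v.1 true hvl]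
      exact heq
    by_cases hmr1 : m + 1 ≤ r - 1
    · have := hle (m + 1) hmr1 hQm1
      omega
    · have hmeq : r - (m + 1) = 0 := by omega
      apply hvz
      apply Subtype.ext
      rw [hmeq] at hQm1
      simpa using hQm1
  -- bits agree strictly above position r - m - 1
  have hsame : ∀ j, r - m ≤ j → j < r → z.1.getD j true = v.1.getD j true := by
    intro j hj1 hj2
    have h3 := congrArg (fun l : List Bool => l.getD (j - (r - m)) true) hQm
    rw [getD_drop, getD_drop] at h3
    rwa [show r - m + (j - (r - m)) = j from by omega] at h3
  -- main term computation
  set h : ℕ → ℝ := fun k =>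
    if k = m then -((m + 1 : ℝ) * ((2:ℝ) ^ (r - m))⁻¹)
    else ((k : ℝ) + 1) * ((2:ℝ) ^ (r - k))⁻¹ with hh
  have hcast : ∀ p : {p : List Bool // p.length < r},
      (haarLevel (some p) : ℝ) = (p.1.length : ℝ) + 1 := by
    intro p; simp [haarLevel]
  have hterm : ∀ p : {p : List Bool // p.length < r},
      (haarLevel (some p) : ℝ) * g (some p) v * g (some p) z
        = if p.1 <:+ v.1 ∧ p.1.length < m + 1 then h p.1.length else 0 := by
    intro p
    by_cases hpv : p.1 <:+ v.1
    · by_cases hkm : p.1.length < m + 1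
      · -- common suffix
        have hp' : p.1 = v.1.drop (r - p.1.length) := (suffix_iff v p.1).mp hpv
        have hpz : p.1 <:+ z.1 :=
          (suffix_iff z p.1).mpr (hp'.trans (hmono p.1.length (by omega)).symm)
        rw [if_pos ⟨hpv, hkm⟩]
        simp only [g, if_pos hpv, if_pos hpz]
        rw [mul_assoc, sign_mul_sign, hcast p]
        simp only [hh]
        by_cases hkm' : p.1.length = m
        · have hb : ¬ (v.1.getD (r - p.1.length - 1) true
              = z.1.getD (r - p.1.length - 1) true) := by
            rw [hkm']
            exact fun hc => hbit (hc.symm)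
          rw [if_neg hb, if_pos hkm', sq_sqrt_inv, hkm']
          ring
        · have hklt : p.1.length < m := by omega
          have hbs : v.1.getD (r - p.1.length - 1) true
              = z.1.getD (r - p.1.length - 1) true :=
            (hsame (r - p.1.length - 1) (by omega) (by omega)).symm
          rw [if_pos hbs, if_neg hkm', sq_sqrt_inv]
      · -- p.1.length > m : p is not a suffix of z
        have hpz : ¬ (p.1 <:+ z.1) := by
          intro hpz
          have h1 : z.1.drop (r - p.1.length) = v.1.drop (r - p.1.length) := by
            rw [suffix_iff z p.1] at hpz
            rw [suffix_iff v p.1] at hpv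
            rw [← hpz, ← hpv]
          have h2 : p.1.length ≤ r - 1 := by have := p.2; omega
          have := hle p.1.length h2 h1
          omega
        rw [if_neg (by tauto)]
        simp only [g, if_neg hpz]
        ring
    · rw [if_neg (by tauto)]
      simp only [g, if_neg hpv]
      ring
  have hFeq : F v z = ∑ k ∈ Finset.range (m + 1), h k := by
    unfold F
    rw [Fintype.sum_option]
    have h0 : (haarLevel (none : HaarIdx r) : ℝ) * g none v * g none z = 0 := by
      simp [haarLevel]
    rw [h0, Finset.sum_congr rfl (fun p _ => hterm p), zero_add]
    exact sum_suffix hr v h (m + 1) (by omega)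
  rw [hFeq, Finset.sum_range_succ]
  have hhm : h m = -((m + 1 : ℝ) * ((2:ℝ) ^ (r - m))⁻¹) := by simp only [hh]; simp
  have hbound : ∑ k ∈ Finset.range m, h k
      ≤ (m + 1 : ℝ) * (((2:ℝ) ^ m - 1) * ((2:ℝ) ^ r)⁻¹) := by
    calc ∑ k ∈ Finset.range m, h k
        ≤ ∑ k ∈ Finset.range m, (m + 1 : ℝ) * ((2:ℝ) ^ (r - k))⁻¹ := by
          apply Finset.sum_le_sum
          intro k hk
          have hkm : k < m := Finset.mem_range.mp hk
          simp only [hh, if_neg (Nat.ne_of_lt hkm)]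
          apply mul_le_mul_of_nonneg_right _ (by positivity)
          have : (k : ℝ) < (m : ℝ) := by exact_mod_cast hkm
          linarith
      _ = (m + 1 : ℝ) * ∑ k ∈ Finset.range m, ((2:ℝ) ^ (r - k))⁻¹ := by
          rw [Finset.mul_sum]
      _ = (m + 1 : ℝ) * (((2:ℝ) ^ m - 1) * ((2:ℝ) ^ r)⁻¹) := by
          rw [sum_pow_inv m hmr'.le]
  have hrm : ((2:ℝ) ^ (r - m))⁻¹ = (2:ℝ) ^ m * ((2:ℝ) ^ r)⁻¹ := pow_inv_split hmr'.le
  rw [hhm, hrm]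
  have hpos : (0:ℝ) < ((2:ℝ) ^ r)⁻¹ := by positivity
  nlinarith [hbound, hpos, (show (0:ℝ) ≤ (m:ℝ) + 1 by positivity)]

end NRow

/-- for each vertex v of the binary tree with |v| = r ≥ 1,
Σ_{z ∈ S_r} |⟨δ_v, N δ_z⟩| ≤ 2|v|, N the Haar-level operator on ℓ²(S_r). -/
theorem N_row_sum_bound (r : ℕ) (hr : 1 ≤ r) (v : Sph r) :
    ∑' z : Sph r, ‖Nent v z‖ ≤ 2 * r := by
  classical
  have hr0 : 0 < r := hr
  rw [tsum_fintype]
  have hnorm : ∀ z : Sph r, ‖Nent v z‖ = |NRow.F v z| := by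
    intro z
    rw [NRow.Nent_eq, Complex.norm_real, Real.norm_eq_abs]
  have hstep : ∀ z : Sph r,
      |NRow.F v z| = 2 * (if z = v then NRow.F v z else 0) - NRow.F v z := by
    intro z
    by_cases hz : z = v
    · subst hz
      rw [if_pos rfl, abs_of_nonneg (NRow.F_self_nonneg z)]
      ring
    · rw [if_neg hz, abs_of_nonpos (NRow.F_offdiag_nonpos hr0 v z hz)]
      ring
  calc ∑ z : Sph r, ‖Nent v z‖
      = ∑ z : Sph r, (2 * (if z = v then NRow.F v z else 0) - NRow.F v z) := by
        apply Finset.sum_congr rfl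
        intro z _
        rw [hnorm z, hstep z]
    _ = 2 * NRow.F v v - ∑ z : Sph r, NRow.F v z := by
        rw [Finset.sum_sub_distrib, ← Finset.mul_sum, Finset.sum_ite_eq' Finset.univ v]
        simp
    _ = 2 * NRow.F v v := by rw [NRow.sum_F_zero hr0 v]; ring
    _ ≤ 2 * r := by
        have := NRow.F_self_le hr0 v
        linarith

end
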